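/- Fix tf > 0, p0, v0, pT ∈ ℝ². Set d = pT − p0 − tf • v0, α = (6 / tf²) • d + (2 / tf) • v0, β = −(12 / tf³) • d − (6 / tf²) • v0, and ρ = (1/2) (tf * ‖α‖² + tf² * ⟪α, β⟫ + (tf³ / 3) * ‖β‖²). Let u : ℝ → ℝ² be square-integrable on [0, tf] and suppose it steers the double integrator from (p0, v0) at time 0 to (pT, 0) at time tf, i.e., ∫ t in (0 : ℝ)..tf, u t = −v0 and ∫ t in (0 : ℝ)..tf, (tf − t) • u t = pT − p0 − tf • v0. Then the energy cost of u is at least the optimal cost-to-go: (1/2) ∫ t in (0 : ℝ)..tf, ‖u t‖² ≥ ρ, with equality when u(t) = α + t • β. -/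

import Mathlib

open scoped RealInnerProductSpace
open MeasureTheory

lemma aux_inner_algebra {E : Type*} [NormedAddCommGroup E] [InnerProductSpace ℝ E]
    (tf : ℝ) (htf0 : tf ≠ 0) (d v0 α β : E)
    (hα : α = (6 / tf ^ 2) • d + (2 / tf) • v0)
    (hβ : β = -((12 / tf ^ 3) • d) - (6 / tf ^ 2) • v0) :
    ⟪α, -v0⟫ + ⟪β, -(tf • v0) - d⟫
      = tf * ‖α‖ ^ 2 + tf ^ 2 * ⟪α, β⟫ + (tf ^ 3 / 3) * ‖β‖ ^ 2 := by
  subst hα hβ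
  simp only [← real_inner_self_eq_norm_sq, inner_add_left, inner_add_right,
    inner_sub_left, inner_sub_right, inner_neg_left, inner_neg_right,
    real_inner_smul_left, real_inner_smul_right]
  rw [real_inner_comm v0 d]
  field_simp
  ring

set_option maxHeartbeats 1000000 in
/-- Any square-integrable control `u` steering the double integrator
from `(p0, v0)` at time `0` to `(pT, 0)` at time `tf` (expressed via the two moment
conditions) has energy cost at least the optimal cost-to-go `ρ`, with equality when
`u(t) = α + t • β`. -/
theorem double_integrator_energy_lower_bound
    (tf : ℝ) (htf : 0 < tf)
    (p0 v0 pT : EuclideanSpace ℝ (Fin 2))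
    (d α β : EuclideanSpace ℝ (Fin 2)) (ρ : ℝ)
    (hd : d = pT - p0 - tf • v0)
    (hα : α = (6 / tf ^ 2) • d + (2 / tf) • v0)
    (hβ : β = -((12 / tf ^ 3) • d) - (6 / tf ^ 2) • v0)
    (hρ : ρ = (1 / 2) * (tf * ‖α‖ ^ 2 + tf ^ 2 * ⟪α, β⟫ + (tf ^ 3 / 3) * ‖β‖ ^ 2))
    (u : ℝ → EuclideanSpace ℝ (Fin 2))
    (hu2 : IntervalIntegrable (fun t => ‖u t‖ ^ 2) volume 0 tf)
    (hmom0 : (∫ t in (0 : ℝ)..tf, u t) = -v0)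
    (hmom1 : (∫ t in (0 : ℝ)..tf, (tf - t) • u t) = pT - p0 - tf • v0) :
    (1 / 2) * (∫ t in (0 : ℝ)..tf, ‖u t‖ ^ 2) ≥ ρ ∧
    ((∀ t : ℝ, u t = α + t • β) →
      (1 / 2) * (∫ t in (0 : ℝ)..tf, ‖u t‖ ^ 2) = ρ) := by
  have htf0 : tf ≠ 0 := htf.ne'
  set w : ℝ → EuclideanSpace ℝ (Fin 2) := fun t => α + t • β with hwdef
  -- integral of a quadratic polynomial
  have hpoly : ∀ a b c : ℝ, (∫ t in (0:ℝ)..tf, (a + b * t + c * t ^ 2))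
      = a * tf + b * (tf ^ 2 / 2) + c * (tf ^ 3 / 3) := by
    intro a b c
    have h1 : IntervalIntegrable (fun t : ℝ => b * t) volume 0 tf :=
      (continuous_const.mul continuous_id).intervalIntegrable _ _
    have h2 : IntervalIntegrable (fun t : ℝ => c * t ^ 2) volume 0 tf :=
      (continuous_const.mul (continuous_pow 2)).intervalIntegrable _ _
    rw [intervalIntegral.integral_add ((intervalIntegrable_const).add h1) h2,
      intervalIntegral.integral_add intervalIntegrable_const h1,
      intervalIntegral.integral_const, intervalIntegral.integral_const_mul,
      intervalIntegral.integral_const_mul, integral_id, integral_pow]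
    push_cast
    simp only [smul_eq_mul]
    ring
  have hwexp : ∀ t : ℝ, ‖w t‖ ^ 2 = ‖α‖ ^ 2 + (2 * ⟪α, β⟫) * t + ‖β‖ ^ 2 * t ^ 2 := by
    intro t
    simp only [hwdef]
    rw [norm_add_sq_real, real_inner_smul_right, norm_smul]
    simp only [mul_pow, Real.norm_eq_abs, sq_abs]
    ring
  have hwnorm : (∫ t in (0:ℝ)..tf, ‖w t‖ ^ 2) = 2 * ρ := by
    rw [intervalIntegral.integral_congr (fun t _ => hwexp t), hpoly, hρ]
    ring
  -- equality part (independent of integrability case analysis)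
  have heq : (∀ t : ℝ, u t = α + t • β) →
      (1 / 2) * (∫ t in (0 : ℝ)..tf, ‖u t‖ ^ 2) = ρ := by
    intro h
    have hcong : (∫ t in (0:ℝ)..tf, ‖u t‖ ^ 2) = ∫ t in (0:ℝ)..tf, ‖w t‖ ^ 2 :=
      intervalIntegral.integral_congr fun t _ => by rw [h t]
    rw [hcong, hwnorm]; ring
  refine ⟨?_, heq⟩
  by_cases hu1 : IntervalIntegrable u volume 0 tf
  · -- main case
    have hsm : IntervalIntegrable (fun t => tf • u t) volume 0 tf := by
      exact hu1.smul tf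
    have htu : IntervalIntegrable (fun t => t • u t) volume 0 tf := by
      rw [intervalIntegrable_iff] at hu1 ⊢
      refine Integrable.mono' (hu1.norm.const_mul tf)
        (aestronglyMeasurable_id.smul hu1.aestronglyMeasurable) ?_
      rw [Set.uIoc_of_le htf.le]
      refine (ae_restrict_iff' measurableSet_Ioc).mpr (Filter.Eventually.of_forall ?_)
      intro t ht
      rw [norm_smul, Real.norm_eq_abs, abs_of_pos ht.1]
      exact mul_le_mul_of_nonneg_right ht.2 (norm_nonneg _)
    have htfu : IntervalIntegrable (fun t => (tf - t) • u t) volume 0 tf := by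
      have e : (fun t => (tf - t) • u t) = fun t => tf • u t - t • u t :=
        funext fun t => by rw [sub_smul]
      rw [e]
      exact hsm.sub htu
    have hintu : (∫ t in (0:ℝ)..tf, t • u t) = -(tf • v0) - d := by
      have e : ∀ t : ℝ, t • u t = tf • u t - (tf - t) • u t := fun t => by
        rw [sub_smul]; abel
      rw [intervalIntegral.integral_congr (fun t _ => e t),
        intervalIntegral.integral_sub hsm htfu,
        intervalIntegral.integral_smul, hmom0, hmom1, hd]
      module
    have hinner1 : IntervalIntegrable (fun t => ⟪α, u t⟫) volume 0 tf :=
      ⟨hu1.1.const_inner α, hu1.2.const_inner α⟩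
    have hinner2 : IntervalIntegrable (fun t => ⟪β, t • u t⟫) volume 0 tf :=
      ⟨htu.1.const_inner β, htu.2.const_inner β⟩
    have hie : (fun t => ⟪u t, w t⟫) = fun t => ⟪α, u t⟫ + ⟪β, t • u t⟫ := by
      funext t
      simp only [hwdef]
      rw [real_inner_comm, inner_add_left, real_inner_smul_left, real_inner_smul_right]
    have hinner : IntervalIntegrable (fun t => ⟪u t, w t⟫) volume 0 tf := by
      rw [hie]; exact hinner1.add hinner2
    have hcross : (∫ t in (0:ℝ)..tf, ⟪u t, w t⟫) = 2 * ρ := by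
      have i1 : (∫ t in (0:ℝ)..tf, ⟪α, u t⟫) = ⟪α, -v0⟫ := by
        have h := (innerSL ℝ α).intervalIntegral_comp_comm hu1
        rw [hmom0] at h
        simpa only [innerSL_apply_apply] using h
      have i2 : (∫ t in (0:ℝ)..tf, ⟪β, t • u t⟫) = ⟪β, -(tf • v0) - d⟫ := by
        have h := (innerSL ℝ β).intervalIntegral_comp_comm htu
        rw [hintu] at h
        simpa only [innerSL_apply_apply] using h
      rw [hie, intervalIntegral.integral_add hinner1 hinner2, i1, i2,
        aux_inner_algebra tf htf0 d v0 α β hα hβ, hρ]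
      ring
    have hdiff : (∫ t in (0:ℝ)..tf, ‖u t - w t‖ ^ 2)
        = (∫ t in (0:ℝ)..tf, ‖u t‖ ^ 2) - 2 * (2 * ρ) + 2 * ρ := by
      have e : (fun t => ‖u t - w t‖ ^ 2)
          = fun t => (‖u t‖ ^ 2 - 2 * ⟪u t, w t⟫) + ‖w t‖ ^ 2 :=
        funext fun t => by rw [norm_sub_sq_real]
      have hwn2 : IntervalIntegrable (fun t => ‖w t‖ ^ 2) volume 0 tf := by
        apply Continuous.intervalIntegrable
        exact ((continuous_const.add (continuous_id.smul continuous_const)).norm.pow 2)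
      rw [e, intervalIntegral.integral_add (hu2.sub (hinner.const_mul 2)) hwn2,
        intervalIntegral.integral_sub hu2 (hinner.const_mul 2),
        intervalIntegral.integral_const_mul, hcross, hwnorm]
    have hnn : 0 ≤ ∫ t in (0:ℝ)..tf, ‖u t - w t‖ ^ 2 :=
      intervalIntegral.integral_nonneg htf.le fun t _ => by positivity
    rw [hdiff] at hnn
    linarith
  · -- degenerate case: u is not interval integrable
    have h0 : (∫ t in (0:ℝ)..tf, u t) = 0 := intervalIntegral.integral_undef hu1
    have hv0 : v0 = 0 := by
      have : -v0 = 0 := by rw [← hmom0, h0]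
      exact neg_eq_zero.mp this
    have hn2 : ¬ IntervalIntegrable (fun t => (tf - t) • u t) volume 0 tf := by
      intro h2
      apply hu1
      rw [intervalIntegrable_iff, Set.uIoc_of_le htf.le] at h2 hu2 ⊢
      have hne : ∀ᵐ (t : ℝ) ∂(volume.restrict (Set.Ioc 0 tf)), t ≠ tf := by
        refine ae_restrict_of_ae ?_
        refine ae_iff.mpr ?_
        have : {a : ℝ | ¬a ≠ tf} = {tf} := by ext x; simp
        rw [this]
        exact Real.volume_singleton
      have hmeas : AEStronglyMeasurable u (volume.restrict (Set.Ioc 0 tf)) := by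
        have hsm : AEStronglyMeasurable
            (fun t => (tf - t)⁻¹ • ((tf - t) • u t)) (volume.restrict (Set.Ioc 0 tf)) :=
          ((measurable_const.sub measurable_id).inv).aestronglyMeasurable.smul
            h2.aestronglyMeasurable
        refine hsm.congr ?_
        filter_upwards [hne] with t ht
        rw [smul_smul, inv_mul_cancel₀ (sub_ne_zero.mpr (Ne.symm ht)), one_smul]
      have hb : Integrable (fun t => 1 + ‖u t‖ ^ 2) (volume.restrict (Set.Ioc 0 tf)) :=
        (integrable_const 1).add hu2
      refine hb.mono' hmeas (Filter.Eventually.of_forall fun t => ?_)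
      have h1 : (0:ℝ) ≤ ‖u t‖ := norm_nonneg _
      nlinarith [sq_nonneg (‖u t‖ - 1)]
    have h1 : (∫ t in (0:ℝ)..tf, (tf - t) • u t) = 0 := intervalIntegral.integral_undef hn2
    have hdz : d = 0 := by rw [hd, ← hmom1, h1]
    rw [hdz, hv0] at hα hβ
    simp only [smul_zero, add_zero, neg_zero, sub_zero] at hα hβ
    rw [hα, hβ] at hρ
    simp only [norm_zero, inner_zero_left, inner_zero_right] at hρ
    rw [ge_iff_le, hρ]
    have : (0:ℝ) ≤ ∫ t in (0:ℝ)..tf, ‖u t‖ ^ 2 :=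
      intervalIntegral.integral_nonneg htf.le fun t _ => by positivity
    nlinarith
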